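/- Let 𝓛 be the lamplighter group, F̃_n = {(t, K) ∈ 𝓛 : t ∈ [0,n]∩ℤ and K ⊆ [0,n]∩ℤ}, and F_n = (F̃_n)⁻¹ · F̃_n. Then for all integers m ≥ 1 and n > 4m: |F_m F_n F_m \ F_n| / |F_n| ≤ 16·m·4^m·(m² + 4m + 2)² / (n+1). In particular, for m ≥ 3 one has |F_m F_n F_m \ F_n| / |F_n| ≤ 144·m⁵·4^m / (n+1). -/

import Mathlib

open scoped symmDiff

/-- The lamplighter group `ℤ ≀ ℤ₂`, realized as pairs `(t, K)` with `t ∈ ℤ` the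
position of the lamplighter and `K` a finite set of integers (the lamps turned on). -/
structure Lamp where
  pos : ℤ
  lamps : Finset ℤ
deriving DecidableEq

namespace Lamp

/-- The shift `t + K` of a finite set of integers. -/
def shift (t : ℤ) (K : Finset ℤ) : Finset ℤ := K.image (t + ·)

lemma mem_shift {t x : ℤ} {K : Finset ℤ} : x ∈ shift t K ↔ x - t ∈ K := by
  constructor
  · rintro h
    simp only [shift, Finset.mem_image] at h
    obtain ⟨k, hk, rfl⟩ := h
    simpa using hk
  · intro h
    simp only [shift, Finset.mem_image]
    exact ⟨x - t, h, by ring⟩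

lemma shift_symmDiff (t : ℤ) (A B : Finset ℤ) :
    shift t (A ∆ B) = shift t A ∆ shift t B := by
  ext x
  simp [mem_shift, Finset.mem_symmDiff]

lemma shift_shift (s t : ℤ) (K : Finset ℤ) : shift s (shift t K) = shift (s + t) K := by
  ext x
  simp [mem_shift, sub_sub]

lemma shift_zero (K : Finset ℤ) : shift 0 K = K := by
  ext x; simp [mem_shift]

lemma shift_empty (t : ℤ) : shift t (∅ : Finset ℤ) = ∅ := by
  simp [shift]

lemma empty_symmDiff (A : Finset ℤ) : (∅ : Finset ℤ) ∆ A = A := by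
  ext x; simp [Finset.mem_symmDiff]

lemma symmDiff_empty (A : Finset ℤ) : A ∆ (∅ : Finset ℤ) = A := by
  ext x; simp [Finset.mem_symmDiff]

lemma symmDiff_self' (A : Finset ℤ) : A ∆ A = (∅ : Finset ℤ) := by
  ext x; simp [Finset.mem_symmDiff]

instance : Mul Lamp := ⟨fun a b => ⟨a.pos + b.pos, a.lamps ∆ shift a.pos b.lamps⟩⟩
instance : One Lamp := ⟨⟨0, ∅⟩⟩
instance : Inv Lamp := ⟨fun a => ⟨-a.pos, shift (-a.pos) a.lamps⟩⟩

@[simp] lemma mul_pos' (a b : Lamp) : (a * b).pos = a.pos + b.pos := rfl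
@[simp] lemma mul_lamps (a b : Lamp) : (a * b).lamps = a.lamps ∆ shift a.pos b.lamps := rfl
@[simp] lemma one_pos' : (1 : Lamp).pos = 0 := rfl
@[simp] lemma one_lamps : (1 : Lamp).lamps = ∅ := rfl
@[simp] lemma inv_pos' (a : Lamp) : a⁻¹.pos = -a.pos := rfl
@[simp] lemma inv_lamps (a : Lamp) : a⁻¹.lamps = shift (-a.pos) a.lamps := rfl

@[ext] lemma ext' {a b : Lamp} (h1 : a.pos = b.pos) (h2 : a.lamps = b.lamps) : a = b := by
  cases a; cases b; simp_all

instance : Group Lamp where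
  mul_assoc a b c := by
    refine ext' ?_ ?_
    · simp [add_assoc]
    · simp [shift_symmDiff, shift_shift, symmDiff_assoc]
  one_mul a := by
    refine ext' ?_ ?_
    · simp
    · rw [mul_lamps, one_lamps, one_pos', shift_zero, empty_symmDiff]
  mul_one a := by
    refine ext' ?_ ?_
    · simp
    · rw [mul_lamps, one_lamps, shift_empty, symmDiff_empty]
  inv_mul_cancel a := by
    refine ext' ?_ ?_
    · simp
    · rw [mul_lamps, inv_lamps, inv_pos', symmDiff_self', one_lamps]

/-- The standard right Følner sets `F̃ n` of the lamplighter group. -/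
def Ftilde (n : ℕ) : Set Lamp :=
  {x | x.pos ∈ Set.Icc (0 : ℤ) n ∧ ∀ k ∈ x.lamps, k ∈ Set.Icc (0 : ℤ) n}

end Lamp

open Pointwise

/-- The two-sided Følner sets `F n = (F̃ n)⁻¹ · F̃ n` of the lamplighter group. -/
def Lamp.F (n : ℕ) : Set Lamp := (Lamp.Ftilde n)⁻¹ * Lamp.Ftilde n

namespace Lamp

open Finset

/-- The support of a lamp configuration: lamps plus origin and position. -/
def supp (x : Lamp) : Finset ℤ := insert 0 (insert x.pos x.lamps)

lemma zero_mem_supp (x : Lamp) : (0 : ℤ) ∈ supp x := by simp [supp]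

lemma pos_mem_supp (x : Lamp) : x.pos ∈ supp x := by simp [supp]

lemma lamps_subset_supp (x : Lamp) : x.lamps ⊆ supp x := by
  intro k hk; simp [supp, hk]

lemma supp_nonempty (x : Lamp) : (supp x).Nonempty := ⟨0, zero_mem_supp x⟩

lemma mem_supp_cases {x : Lamp} {k : ℤ} (hk : k ∈ supp x) :
    k = 0 ∨ k = x.pos ∨ k ∈ x.lamps := by
  simpa [supp] using hk

lemma mem_F_iff {N : ℕ} {x : Lamp} :
    x ∈ F N ↔ ∃ a : ℤ, supp x ⊆ Finset.Icc a (a + N) := by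
  constructor
  · rintro hx
    rw [F, Set.mem_mul] at hx
    obtain ⟨u, hu, v, hv, rfl⟩ := hx
    rw [Set.mem_inv] at hu
    obtain ⟨hupos, hulamps⟩ := hu
    obtain ⟨hvpos, hvlamps⟩ := hv
    simp only [inv_pos', Set.mem_Icc] at hupos
    simp only [Set.mem_Icc] at hvpos
    refine ⟨u.pos, ?_⟩
    intro k hk
    rcases mem_supp_cases hk with rfl | h | h
    · simp only [Finset.mem_Icc]; omega
    · rw [h]
      simp only [mul_pos', Finset.mem_Icc]; omega
    · simp only [mul_lamps, Finset.mem_symmDiff] at h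
      simp only [Finset.mem_Icc]
      rcases h with ⟨h, -⟩ | ⟨h, -⟩
      · have : k - u.pos ∈ shift (-u.pos) u.lamps := by
          rw [mem_shift]; simpa using h
        have := hulamps _ this
        simp only [inv_lamps, Set.mem_Icc] at this ⊢
        omega
      · rw [mem_shift] at h
        have := hvlamps _ h
        simp only [Set.mem_Icc] at this
        omega
  · rintro ⟨a, ha⟩
    have h0 : a ≤ 0 ∧ (0:ℤ) ≤ a + N := by
      simpa [Finset.mem_Icc] using ha (zero_mem_supp x)
    have hp : a ≤ x.pos ∧ x.pos ≤ a + N := by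
      simpa [Finset.mem_Icc] using ha (pos_mem_supp x)
    rw [F, Set.mem_mul]
    refine ⟨⟨a, ∅⟩, ?_, ⟨x.pos - a, shift (-a) x.lamps⟩, ?_, ?_⟩
    · rw [Set.mem_inv]
      constructor
      · simp only [inv_pos', Set.mem_Icc]; omega
      · intro k hk
        simp only [inv_lamps, shift_empty] at hk
        exact absurd hk (Finset.notMem_empty k)
    · constructor
      · simp only [Set.mem_Icc]; omega
      · intro k hk
        rw [mem_shift] at hk
        have := ha (lamps_subset_supp x hk)
        simp only [Finset.mem_Icc] at this
        simp only [Set.mem_Icc]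
        omega
    · refine ext' ?_ ?_
      · simp
      · show (∅ : Finset ℤ) ∆ shift a (shift (-a) x.lamps) = x.lamps
        rw [empty_symmDiff, shift_shift]
        simp [shift_zero]

end Lamp
namespace Lamp

open Finset

/-- Left endpoint of the support. -/
def lo (x : Lamp) : ℤ := (supp x).min' (supp_nonempty x)
/-- Right endpoint of the support. -/
def hi (x : Lamp) : ℤ := (supp x).max' (supp_nonempty x)

lemma lo_le {x : Lamp} {k : ℤ} (hk : k ∈ supp x) : lo x ≤ k := Finset.min'_le _ _ hk
lemma le_hi {x : Lamp} {k : ℤ} (hk : k ∈ supp x) : k ≤ hi x := Finset.le_max' _ _ hk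
lemma lo_nonpos (x : Lamp) : lo x ≤ 0 := lo_le (zero_mem_supp x)
lemma hi_nonneg (x : Lamp) : 0 ≤ hi x := le_hi (zero_mem_supp x)
lemma lo_mem (x : Lamp) : lo x ∈ supp x := Finset.min'_mem _ _
lemma hi_mem (x : Lamp) : hi x ∈ supp x := Finset.max'_mem _ _

lemma hi_le_lo_add {N : ℕ} {x : Lamp} (hx : x ∈ F N) : hi x ≤ lo x + N := by
  obtain ⟨a, ha⟩ := mem_F_iff.1 hx
  have h1 := ha (lo_mem x)
  have h2 := ha (hi_mem x)
  simp only [Finset.mem_Icc] at h1 h2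
  omega

lemma mem_F_small {m : ℕ} {a : Lamp} (ha : a ∈ F m) {k : ℤ} (hk : k ∈ supp a) :
    -(m:ℤ) ≤ k ∧ k ≤ m := by
  obtain ⟨w, hw⟩ := mem_F_iff.1 ha
  have h0 := hw (zero_mem_supp a)
  have h1 := hw hk
  simp only [Finset.mem_Icc] at h0 h1
  omega

lemma lamps_mul_cases {a b : Lamp} {k : ℤ} (hk : k ∈ (a * b).lamps) :
    k ∈ a.lamps ∨ k - a.pos ∈ b.lamps := by
  rw [mul_lamps, Finset.mem_symmDiff] at hk
  rcases hk with ⟨h, -⟩ | ⟨h, -⟩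
  · exact Or.inl h
  · exact Or.inr (mem_shift.1 h)

lemma good_mul {m n : ℕ} {a y b : Lamp} (ha : a ∈ F m) (hy : y ∈ F n) (hb : b ∈ F m)
    (h1 : lo y ≤ -(2*m)) (h2 : (2*(m:ℤ)) ≤ hi y)
    (h3 : lo y ≤ y.pos - 2*m) (h4 : y.pos + 2*m ≤ hi y) :
    a * y * b ∈ F n := by
  have hwidth := hi_le_lo_add hy
  have hapos := mem_F_small ha (pos_mem_supp a)
  have hbpos := mem_F_small hb (pos_mem_supp b)
  have hypos₁ := lo_le (pos_mem_supp y)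
  have hypos₂ := le_hi (pos_mem_supp y)
  rw [mem_F_iff]
  refine ⟨a.pos + lo y, ?_⟩
  intro k hk
  simp only [Finset.mem_Icc]
  have key : a.pos + lo y ≤ k ∧ k ≤ a.pos + hi y := by
    rcases mem_supp_cases hk with rfl | hk | hk
    · omega
    · have : ((a * y) * b).pos = a.pos + y.pos + b.pos := by simp
      rw [hk, this]
      omega
    · rcases lamps_mul_cases hk with hk | hk
      · rcases lamps_mul_cases hk with hk | hk
        · have := mem_F_small ha (lamps_subset_supp a hk)
          omega
        · have h5 := lo_le (lamps_subset_supp y hk)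
          have h6 := le_hi (lamps_subset_supp y hk)
          omega
      · have : (a * y).pos = a.pos + y.pos := by simp
        rw [this] at hk
        have := mem_F_small hb (lamps_subset_supp b hk)
        omega
  omega

end Lamp
namespace Lamp

open Finset

/-- `y` is `m`-good: its support extends at least `2m` beyond `0` and `y.pos` on both sides. -/
def Good (m : ℕ) (y : Lamp) : Prop :=
  lo y ≤ -(2*(m:ℤ)) ∧ (2*(m:ℤ)) ≤ hi y ∧ lo y ≤ y.pos - 2*m ∧ y.pos + 2*m ≤ hi y

/-- The bad part of `F n`. -/
def Bad (m n : ℕ) : Set Lamp := {y ∈ F n | ¬ Good m y}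

lemma diff_subset (m n : ℕ) : (F m * F n * F m) \ F n ⊆ F m * Bad m n * F m := by
  rintro x ⟨hx, hxn⟩
  rw [Set.mem_mul] at hx
  obtain ⟨z, hz, b, hb, rfl⟩ := hx
  rw [Set.mem_mul] at hz
  obtain ⟨a, ha, y, hy, rfl⟩ := hz
  by_cases hg : Good m y
  · exact absurd (good_mul ha hy hb hg.1 hg.2.1 hg.2.2.1 hg.2.2.2) hxn
  · exact Set.mul_mem_mul (Set.mul_mem_mul ha ⟨hy, hg⟩) hb

/-- Index finset for the covering maps. -/
noncomputable def idx (c d : ℕ) : Finset (ℤ × ℤ × Finset ℤ) :=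
  (Finset.Icc (0:ℤ) (c-1)) ×ˢ ((Finset.Icc (0:ℤ) d) ×ˢ (Finset.Icc (0:ℤ) d).powerset)

lemma card_icc (d : ℕ) : (Finset.Icc (0:ℤ) d).card = d + 1 := by
  rw [Int.card_Icc]; omega

lemma card_idx (c d : ℕ) : (idx c d).card = c * ((d+1) * 2^(d+1)) := by
  have h1 : (Finset.Icc (0:ℤ) ((c:ℤ)-1)).card = c := by rw [Int.card_Icc]; omega
  rw [idx, Finset.card_product, Finset.card_product, Finset.card_powerset, h1, card_icc]

lemma image_sub_add (L : Finset ℤ) (c : ℤ) :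
    ((L.image (fun t => t - c)).image (fun t => t + c)) = L := by
  rw [Finset.image_image]
  have : ((fun t => t + c) ∘ (fun t => t - c)) = id := by
    funext t; simp
  rw [this, Finset.image_id]

/-- Generic covering map. -/
def cov (g h : ℤ → ℤ → ℤ) (p : ℤ × ℤ × Finset ℤ) : Lamp :=
  ⟨g p.1 p.2.1, p.2.2.image (fun t => t + h p.1 p.2.1)⟩

lemma mem_cov_image {m n : ℕ} {g h : ℤ → ℤ → ℤ} {y : Lamp} (v σ : ℤ)
    (hv : 0 ≤ v ∧ v ≤ 2*(m:ℤ) - 1) (hσ : 0 ≤ σ ∧ σ ≤ n)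
    (hg : g v σ = y.pos) (hlamps : ∀ k ∈ y.lamps, h v σ ≤ k ∧ k ≤ h v σ + n) :
    y ∈ (idx (2*m) n).image (cov g h) := by
  rw [Finset.mem_image]
  refine ⟨⟨v, σ, y.lamps.image (fun t => t - h v σ)⟩, ?_, ?_⟩
  · rw [idx, Finset.mem_product, Finset.mem_product]
    refine ⟨?_, ?_, ?_⟩
    · simp only [Finset.mem_Icc]; push_cast; omega
    · simp only [Finset.mem_Icc]; omega
    · rw [Finset.mem_powerset]
      intro k hk
      simp only [Finset.mem_image] at hk
      obtain ⟨t, ht, rfl⟩ := hk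
      have := hlamps t ht
      simp only [Finset.mem_Icc]
      omega
  · rw [cov]
    refine ext' ?_ ?_
    · exact hg
    · exact image_sub_add y.lamps (h v σ)

lemma card_cov_le (m n : ℕ) (g h : ℤ → ℤ → ℤ) :
    ((idx (2*m) n).image (cov g h)).card ≤ 2*m * ((n+1) * 2^(n+1)) := by
  calc ((idx (2*m) n).image (cov g h)).card ≤ (idx (2*m) n).card := Finset.card_image_le
  _ = 2*m * ((n+1) * 2^(n+1)) := card_idx _ _

/-- The bad set is covered by four covering images. -/
lemma bad_subset (m n : ℕ) :
    Bad m n ⊆ ↑((idx (2*m) n).image (cov (fun u σ => σ - u) (fun u _ => -u)) ∪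
      (idx (2*m) n).image (cov (fun u σ => σ + (u - n)) (fun u _ => u - (n:ℤ))) ∪
      (idx (2*m) n).image (cov (fun v σ => σ - v) (fun _ σ => σ - n)) ∪
      (idx (2*m) n).image (cov (fun v σ => σ - n + v) (fun _ σ => σ - (n:ℤ)))) := by
  rintro y ⟨hy, hbad⟩
  have hw := hi_le_lo_add hy
  have hp0 := lo_nonpos y
  have hq0 := hi_nonneg y
  have hs1 := lo_le (pos_mem_supp y)
  have hs2 := le_hi (pos_mem_supp y)
  have hlam : ∀ k ∈ y.lamps, lo y ≤ k ∧ k ≤ hi y := fun k hk =>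
    ⟨lo_le (lamps_subset_supp y hk), le_hi (lamps_subset_supp y hk)⟩
  simp only [Finset.coe_union, Set.mem_union, Finset.mem_coe]
  rw [Good] at hbad
  push_neg at hbad
  by_cases h1 : lo y ≤ -(2*(m:ℤ))
  · by_cases h2 : (2*(m:ℤ)) ≤ hi y
    · by_cases h3 : lo y ≤ y.pos - 2*m
      · -- fourth condition fails : hi y < y.pos + 2m
        have h4 := hbad h1 h2 h3
        left; right
        refine mem_cov_image (m := m) (hi y - y.pos) (hi y) ⟨by omega, by omega⟩
          ⟨by omega, by omega⟩ (by ring) ?_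
        intro k hk; have := hlam k hk; omega
      · -- third fails : lo y > y.pos - 2m
        right
        push_neg at h3
        refine mem_cov_image (m := m) (y.pos - lo y) (lo y + n) ⟨by omega, by omega⟩
          ⟨by omega, by omega⟩ (by ring) ?_
        intro k hk; have := hlam k hk; omega
    · -- second fails : hi y < 2m
      left; left; right
      push_neg at h2
      refine mem_cov_image (m := m) (hi y) (y.pos - (hi y - n)) ⟨by omega, by omega⟩
        ⟨by omega, by omega⟩ (by ring) ?_
      intro k hk; have := hlam k hk; omega
  · -- first fails : lo y > -2m
    left; left; left
    push_neg at h1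
    refine mem_cov_image (m := m) (-(lo y)) (y.pos - lo y) ⟨by omega, by omega⟩
      ⟨by omega, by omega⟩ (by ring) ?_
    intro k hk; have := hlam k hk; omega

end Lamp
namespace Lamp

open Finset

lemma image_image_cancel (L : Finset ℤ) {f g : ℤ → ℤ} (h : ∀ t, g (f t) = t) :
    (L.image f).image g = L := by
  rw [Finset.image_image]
  have : (g ∘ f) = id := funext h
  rw [this, Finset.image_id]

/-- F N is contained in a big finite window. -/
lemma F_finite (N : ℕ) : (F N).Finite := by
  apply Set.Finite.subset (Finset.finite_toSet
    (((Finset.Icc (-(N:ℤ)) N) ×ˢ (Finset.Icc (-(N:ℤ)) N).powerset).image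
      (fun p => (⟨p.1, p.2⟩ : Lamp))))
  intro x hx
  obtain ⟨a, ha⟩ := mem_F_iff.1 hx
  have h0 : a ≤ 0 ∧ (0:ℤ) ≤ a + N := by
    simpa [Finset.mem_Icc] using ha (zero_mem_supp x)
  have hsub : ∀ k ∈ supp x, -(N:ℤ) ≤ k ∧ k ≤ N := by
    intro k hk
    have := ha hk
    simp only [Finset.mem_Icc] at this
    omega
  simp only [Finset.coe_image, Set.mem_image, Finset.mem_coe, Finset.mem_product]
  refine ⟨⟨x.pos, x.lamps⟩, ⟨?_, ?_⟩, rfl⟩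
  · have := hsub _ (pos_mem_supp x)
    simp only [Finset.mem_Icc]; omega
  · rw [Finset.mem_powerset]
    intro k hk
    have := hsub _ (lamps_subset_supp x hk)
    simp only [Finset.mem_Icc]; omega

/-- The three pieces covering `F m`. -/
noncomputable def C₀ (m : ℕ) : Finset Lamp :=
  ((Finset.Icc (0:ℤ) m) ×ˢ (Finset.Icc (0:ℤ) m).powerset).image (fun p => ⟨p.1, p.2⟩)

noncomputable def C₁ (m : ℕ) : Finset Lamp :=
  ((Finset.Icc (-(m:ℤ)) (-1)) ×ˢ (Finset.Icc (0:ℤ) m).powerset).image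
    (fun p => ⟨p.1, p.2.image (fun t => t + p.1)⟩)

noncomputable def C₂ (m : ℕ) : Finset Lamp :=
  ((Finset.Icc (1:ℤ) m) ×ˢ (Finset.Icc (1:ℤ) m) ×ˢ (Finset.Icc (1:ℤ) m).powerset).image
    (fun p => ⟨p.2.1 - p.1, insert (-p.1) (p.2.2.image (fun t => t - p.1))⟩)

lemma F_subset_C (m : ℕ) : F m ⊆ ↑(C₀ m ∪ C₁ m ∪ C₂ m) := by
  intro x hx
  have hw := hi_le_lo_add hx
  have hp0 := lo_nonpos x
  have hq0 := hi_nonneg x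
  have hs1 := lo_le (pos_mem_supp x)
  have hs2 := le_hi (pos_mem_supp x)
  have hlam : ∀ k ∈ x.lamps, lo x ≤ k ∧ k ≤ hi x := fun k hk =>
    ⟨lo_le (lamps_subset_supp x hk), le_hi (lamps_subset_supp x hk)⟩
  simp only [Finset.coe_union, Set.mem_union, Finset.mem_coe]
  by_cases hp : lo x = 0
  · left; left
    rw [C₀, Finset.mem_image]
    refine ⟨⟨x.pos, x.lamps⟩, ?_, rfl⟩
    rw [Finset.mem_product, Finset.mem_powerset]
    constructor
    · simp only [Finset.mem_Icc]; omega
    · intro k hk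
      have := hlam k hk
      simp only [Finset.mem_Icc]; omega
  · have hpneg : lo x < 0 := lt_of_le_of_ne hp0 hp
    by_cases hpp : x.pos = lo x
    · left; right
      rw [C₁, Finset.mem_image]
      refine ⟨⟨x.pos, x.lamps.image (fun t => t - x.pos)⟩, ?_, ?_⟩
      · rw [Finset.mem_product, Finset.mem_powerset]
        constructor
        · simp only [Finset.mem_Icc]; omega
        · intro k hk
          simp only [Finset.mem_image] at hk
          obtain ⟨t, ht, rfl⟩ := hk
          have := hlam t ht
          simp only [Finset.mem_Icc]; omega
      · exact ext' rfl (image_image_cancel _ (fun t => by ring))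
    · -- lo x ∈ lamps, pos > lo
      have hpl : lo x ∈ x.lamps := by
        rcases mem_supp_cases (lo_mem x) with h | h | h
        · omega
        · exact absurd h.symm hpp
        · exact h
      right
      rw [C₂, Finset.mem_image]
      refine ⟨⟨-(lo x), x.pos - lo x, (x.lamps.erase (lo x)).image (fun t => t - lo x)⟩,
        ?_, ?_⟩
      · rw [Finset.mem_product, Finset.mem_product, Finset.mem_powerset]
        have hposgt : lo x < x.pos := lt_of_le_of_ne hs1 (fun h => hpp h.symm)
        refine ⟨?_, ?_, ?_⟩
        · simp only [Finset.mem_Icc]; omega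
        · simp only [Finset.mem_Icc]; omega
        · intro k hk
          simp only [Finset.mem_image] at hk
          obtain ⟨t, ht, rfl⟩ := hk
          rw [Finset.mem_erase] at ht
          have := hlam t ht.2
          have := ht.1
          simp only [Finset.mem_Icc]; omega
      · refine ext' (by ring) ?_
        show insert (-(-(lo x))) _ = x.lamps
        rw [image_image_cancel _ (fun t => by ring), neg_neg, Finset.insert_erase hpl]

lemma card_C (m : ℕ) : (C₀ m ∪ C₁ m ∪ C₂ m).card ≤ 2^m * (m^2 + 4*m + 2) := by
  have h0 : (C₀ m).card ≤ (m+1) * 2^(m+1) := by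
    calc (C₀ m).card ≤ _ := Finset.card_image_le
    _ = (m+1) * 2^(m+1) := by
      rw [Finset.card_product, Finset.card_powerset, card_icc]
  have h1 : (C₁ m).card ≤ m * 2^(m+1) := by
    calc (C₁ m).card ≤ _ := Finset.card_image_le
    _ = m * 2^(m+1) := by
      rw [Finset.card_product, Finset.card_powerset, card_icc]
      congr 1
      rw [Int.card_Icc]; omega
  have h2 : (C₂ m).card ≤ m * (m * 2^m) := by
    calc (C₂ m).card ≤ _ := Finset.card_image_le
    _ ≤ m * (m * 2^m) := by
      rw [Finset.card_product, Finset.card_product, Finset.card_powerset]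
      have : (Finset.Icc (1:ℤ) m).card = m := by rw [Int.card_Icc]; omega
      rw [this]
  calc (C₀ m ∪ C₁ m ∪ C₂ m).card ≤ (C₀ m ∪ C₁ m).card + (C₂ m).card := Finset.card_union_le _ _
  _ ≤ (C₀ m).card + (C₁ m).card + (C₂ m).card := by
      have := Finset.card_union_le (C₀ m) (C₁ m); omega
  _ ≤ (m+1) * 2^(m+1) + m * 2^(m+1) + m * (m * 2^m) := by omega
  _ = 2^m * (m^2 + 4*m + 2) := by rw [pow_succ]; ring

lemma ncard_F_le (m : ℕ) : (F m).ncard ≤ 2^m * (m^2 + 4*m + 2) := by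
  calc (F m).ncard ≤ (↑(C₀ m ∪ C₁ m ∪ C₂ m) : Set Lamp).ncard :=
        Set.ncard_le_ncard (F_subset_C m) (Finset.finite_toSet _)
  _ = (C₀ m ∪ C₁ m ∪ C₂ m).card := Set.ncard_coe_finset _
  _ ≤ _ := card_C m

end Lamp
namespace Lamp

open Finset

/-- The injection witnessing the lower bound for `|F n|`. -/
def J (p : ℤ × ℤ × Finset ℤ) : Lamp :=
  ⟨p.2.1 - p.1, insert (-p.1) (p.2.2.image (fun t => t - p.1))⟩

noncomputable def Jdom (n : ℕ) : Finset (ℤ × ℤ × Finset ℤ) :=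
  (Finset.Icc (0:ℤ) n) ×ˢ (Finset.Icc (0:ℤ) n) ×ˢ (Finset.Icc (1:ℤ) n).powerset

lemma J_mem_F {n : ℕ} {p : ℤ × ℤ × Finset ℤ} (hp : p ∈ Jdom n) : J p ∈ F n := by
  rw [Jdom, Finset.mem_product, Finset.mem_product, Finset.mem_powerset] at hp
  obtain ⟨hu, hσ, hL⟩ := hp
  simp only [Finset.mem_Icc] at hu hσ
  rw [mem_F_iff]
  refine ⟨-p.1, ?_⟩
  intro k hk
  rcases mem_supp_cases hk with rfl | h | h
  · simp only [Finset.mem_Icc]; omega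
  · rw [h]; show p.2.1 - p.1 ∈ _
    simp only [Finset.mem_Icc]; omega
  · simp only [J, Finset.mem_insert, Finset.mem_image] at h
    rcases h with rfl | ⟨t, ht, rfl⟩
    · simp only [Finset.mem_Icc]; omega
    · have := hL ht
      simp only [Finset.mem_Icc] at this ⊢
      omega

lemma J_injOn (n : ℕ) : Set.InjOn J (Jdom n) := by
  rintro ⟨u, σ, L⟩ hp ⟨u', σ', L'⟩ hq hpq
  simp only [Jdom, Finset.coe_product, Set.mem_prod, Finset.mem_coe, Finset.mem_Icc,
    Finset.mem_powerset] at hp hq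
  obtain ⟨hu, hσ, hL⟩ := hp
  obtain ⟨hu', hσ', hL'⟩ := hq
  have hLbd : ∀ t ∈ L, 1 ≤ t ∧ t ≤ (n:ℤ) := by
    intro t ht; have := hL ht; simp only [Finset.mem_Icc] at this; exact this
  have hLbd' : ∀ t ∈ L', 1 ≤ t ∧ t ≤ (n:ℤ) := by
    intro t ht; have := hL' ht; simp only [Finset.mem_Icc] at this; exact this
  have hlamps : insert (-u) (L.image (fun t => t - u)) =
      insert (-u') (L'.image (fun t => t - u')) := congrArg Lamp.lamps hpq
  have hposeq : σ - u = σ' - u' := congrArg Lamp.pos hpq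
  have h1 : -u ∈ insert (-u') (L'.image (fun t => t - u')) := by
    rw [← hlamps]; exact Finset.mem_insert_self _ _
  have h2 : -u' ∈ insert (-u) (L.image (fun t => t - u)) := by
    rw [hlamps]; exact Finset.mem_insert_self _ _
  simp only [Finset.mem_insert, Finset.mem_image] at h1 h2
  have huv : u = u' := by
    rcases h1 with h | ⟨t, ht, h⟩
    · omega
    · rcases h2 with h' | ⟨t', ht', h'⟩
      · omega
      · have := hLbd' t ht
        have := hLbd t' ht'
        omega
  subst huv
  have hnot : -u ∉ L.image (fun t => t - u) := by
    simp only [Finset.mem_image]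
    rintro ⟨t, ht, h⟩
    have := hLbd t ht; omega
  have hnot' : -u ∉ L'.image (fun t => t - u) := by
    simp only [Finset.mem_image]
    rintro ⟨t, ht, h⟩
    have := hLbd' t ht; omega
  have himg : L.image (fun t => t - u) = L'.image (fun t => t - u) := by
    have h3 := congrArg (fun s => Finset.erase s (-u)) hlamps
    simpa [Finset.erase_insert hnot, Finset.erase_insert hnot'] using h3
  have hset : L = L' := by
    have h4 := congrArg (Finset.image (fun t => t + u)) himg
    rwa [image_image_cancel _ (fun t => by ring),
      image_image_cancel _ (fun t => by ring)] at h4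
  simp only [Prod.mk.injEq]
  exact ⟨trivial, by omega, hset⟩

lemma ncard_F_ge (n : ℕ) : (n+1) * ((n+1) * 2^n) ≤ (F n).ncard := by
  have hcard : ((Jdom n).image J).card = (n+1) * ((n+1) * 2^n) := by
    rw [Finset.card_image_of_injOn (by simpa using J_injOn n)]
    have hI : (Finset.Icc (1:ℤ) n).card = n := by rw [Int.card_Icc]; omega
    rw [Jdom, Finset.card_product, Finset.card_product, Finset.card_powerset, card_icc,
      hI]
  calc (n+1) * ((n+1) * 2^n) = ((Jdom n).image J).card := hcard.symm
  _ = (↑((Jdom n).image J) : Set Lamp).ncard := (Set.ncard_coe_finset _).symm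
  _ ≤ (F n).ncard := by
      apply Set.ncard_le_ncard _ (F_finite n)
      intro x hx
      simp only [Finset.coe_image, Set.mem_image, Finset.mem_coe] at hx
      obtain ⟨pp, hpp, rfl⟩ := hx
      exact J_mem_F hpp

lemma ncard_Bad_le (m n : ℕ) : (Bad m n).ncard ≤ 16 * m * ((n+1) * 2^n) := by
  set U := (idx (2*m) n).image (cov (fun u σ => σ - u) (fun u _ => -u)) ∪
      (idx (2*m) n).image (cov (fun u σ => σ + (u - n)) (fun u _ => u - (n:ℤ))) ∪
      (idx (2*m) n).image (cov (fun v σ => σ - v) (fun _ σ => σ - n)) ∪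
      (idx (2*m) n).image (cov (fun v σ => σ - n + v) (fun _ σ => σ - (n:ℤ))) with hU
  have h1 : (Bad m n).ncard ≤ U.card := by
    calc (Bad m n).ncard ≤ (↑U : Set Lamp).ncard :=
          Set.ncard_le_ncard (bad_subset m n) (Finset.finite_toSet _)
    _ = U.card := Set.ncard_coe_finset _
  have h2 : U.card ≤ 4 * (2*m * ((n+1) * 2^(n+1))) := by
    rw [hU]
    have c1 := card_cov_le m n (fun u σ => σ - u) (fun u _ => -u)
    have c2 := card_cov_le m n (fun u σ => σ + (u - n)) (fun u _ => u - (n:ℤ))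
    have c3 := card_cov_le m n (fun v σ => σ - v) (fun _ σ => σ - n)
    have c4 := card_cov_le m n (fun v σ => σ - n + v) (fun _ σ => σ - (n:ℤ))
    have u1 := Finset.card_union_le
      ((idx (2*m) n).image (cov (fun u σ => σ - u) (fun u _ => -u)))
      ((idx (2*m) n).image (cov (fun u σ => σ + (u - n)) (fun u _ => u - (n:ℤ))))
    have u2 := Finset.card_union_le
      (((idx (2*m) n).image (cov (fun u σ => σ - u) (fun u _ => -u))) ∪
        ((idx (2*m) n).image (cov (fun u σ => σ + (u - n)) (fun u _ => u - (n:ℤ)))))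
      ((idx (2*m) n).image (cov (fun v σ => σ - v) (fun _ σ => σ - n)))
    have u3 := Finset.card_union_le
      ((((idx (2*m) n).image (cov (fun u σ => σ - u) (fun u _ => -u))) ∪
        ((idx (2*m) n).image (cov (fun u σ => σ + (u - n)) (fun u _ => u - (n:ℤ))))) ∪
        ((idx (2*m) n).image (cov (fun v σ => σ - v) (fun _ σ => σ - n))))
      ((idx (2*m) n).image (cov (fun v σ => σ - n + v) (fun _ σ => σ - (n:ℤ))))
    omega
  have h3 : 4 * (2*m * ((n+1) * 2^(n+1))) = 16 * m * ((n+1) * 2^n) := by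
    rw [pow_succ]; ring
  omega

end Lamp

/-- For `m ≥ 1` and `n > 4m`,
`|F m · F n · F m \ F n| / |F n| ≤ 16 m 4^m (m² + 4m + 2)² / (n+1)`, and in
particular for `m ≥ 3` this is `≤ 144 m⁵ 4^m / (n+1)`. -/
theorem stmt15 (m n : ℕ) (hm : 1 ≤ m) (hn : 4 * m < n) :
    (((Lamp.F m * Lamp.F n * Lamp.F m) \ Lamp.F n).ncard : ℝ) / ((Lamp.F n).ncard : ℝ) ≤
      16 * m * 4 ^ m * ((m : ℝ) ^ 2 + 4 * m + 2) ^ 2 / (n + 1) ∧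
    (3 ≤ m →
      (((Lamp.F m * Lamp.F n * Lamp.F m) \ Lamp.F n).ncard : ℝ) / ((Lamp.F n).ncard : ℝ) ≤
        144 * (m : ℝ) ^ 5 * 4 ^ m / (n + 1)) := by
  have hFmfin := Lamp.F_finite m
  have hBadfin : (Lamp.Bad m n).Finite := (Lamp.F_finite n).subset (fun y hy => hy.1)
  have hd1 : ((Lamp.F m * Lamp.F n * Lamp.F m) \ Lamp.F n).ncard ≤
      (Lamp.F m * Lamp.Bad m n * Lamp.F m).ncard :=
    Set.ncard_le_ncard (Lamp.diff_subset m n) ((hFmfin.mul hBadfin).mul hFmfin)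
  have hd2 : (Lamp.F m * Lamp.Bad m n * Lamp.F m).ncard ≤
      (Lamp.F m).ncard * (Lamp.Bad m n).ncard * (Lamp.F m).ncard := by
    have e1 : (Lamp.F m * Lamp.Bad m n * Lamp.F m).ncard ≤
        (Lamp.F m * Lamp.Bad m n).ncard * (Lamp.F m).ncard := by
      rw [← Nat.card_coe_set_eq, ← Nat.card_coe_set_eq, ← Nat.card_coe_set_eq]
      exact Set.natCard_mul_le
    have e2 : (Lamp.F m * Lamp.Bad m n).ncard ≤ (Lamp.F m).ncard * (Lamp.Bad m n).ncard := by
      rw [← Nat.card_coe_set_eq, ← Nat.card_coe_set_eq, ← Nat.card_coe_set_eq]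
      exact Set.natCard_mul_le
    calc (Lamp.F m * Lamp.Bad m n * Lamp.F m).ncard
        ≤ (Lamp.F m * Lamp.Bad m n).ncard * (Lamp.F m).ncard := e1
    _ ≤ (Lamp.F m).ncard * (Lamp.Bad m n).ncard * (Lamp.F m).ncard :=
        Nat.mul_le_mul e2 (le_refl _)
  have hDnat : ((Lamp.F m * Lamp.F n * Lamp.F m) \ Lamp.F n).ncard ≤
      (2^m * (m^2 + 4*m + 2)) * (16 * m * ((n+1) * 2^n)) * (2^m * (m^2 + 4*m + 2)) := by
    have h1 := Lamp.ncard_F_le m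
    have h2 := Lamp.ncard_Bad_le m n
    calc ((Lamp.F m * Lamp.F n * Lamp.F m) \ Lamp.F n).ncard
        ≤ (Lamp.F m).ncard * (Lamp.Bad m n).ncard * (Lamp.F m).ncard := le_trans hd1 hd2
    _ ≤ _ := Nat.mul_le_mul (Nat.mul_le_mul h1 h2) h1
  have hNnat := Lamp.ncard_F_ge n
  -- pass to the reals
  have hD : (((Lamp.F m * Lamp.F n * Lamp.F m) \ Lamp.F n).ncard : ℝ) ≤
      ((2^m * ((m:ℝ)^2 + 4*m + 2)) * (16 * m * ((n+1) * 2^n)) * (2^m * ((m:ℝ)^2 + 4*m + 2))) := by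
    calc (((Lamp.F m * Lamp.F n * Lamp.F m) \ Lamp.F n).ncard : ℝ)
        ≤ (((2^m * (m^2 + 4*m + 2)) * (16 * m * ((n+1) * 2^n)) *
            (2^m * (m^2 + 4*m + 2)) : ℕ) : ℝ) := by exact_mod_cast hDnat
    _ = _ := by push_cast; ring
  have hN : ((n:ℝ)+1) * (((n:ℝ)+1) * 2^n) ≤ ((Lamp.F n).ncard : ℝ) := by
    calc ((n:ℝ)+1) * (((n:ℝ)+1) * 2^n) = (((n+1) * ((n+1) * 2^n) : ℕ) : ℝ) := by
          push_cast; ring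
    _ ≤ _ := by exact_mod_cast hNnat
  have hNpos : (0:ℝ) < ((n:ℝ)+1) * (((n:ℝ)+1) * 2^n) := by positivity
  have hfirst : (((Lamp.F m * Lamp.F n * Lamp.F m) \ Lamp.F n).ncard : ℝ) /
      ((Lamp.F n).ncard : ℝ) ≤ 16 * m * 4 ^ m * ((m : ℝ) ^ 2 + 4 * m + 2) ^ 2 / (n + 1) := by
    calc (((Lamp.F m * Lamp.F n * Lamp.F m) \ Lamp.F n).ncard : ℝ) / ((Lamp.F n).ncard : ℝ)
        ≤ ((2^m * ((m:ℝ)^2 + 4*m + 2)) * (16 * m * ((n+1) * 2^n)) *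
            (2^m * ((m:ℝ)^2 + 4*m + 2))) / (((n:ℝ)+1) * (((n:ℝ)+1) * 2^n)) := by
          apply div_le_div₀ (by positivity) hD hNpos hN
    _ = 16 * m * 4 ^ m * ((m : ℝ) ^ 2 + 4 * m + 2) ^ 2 / (n + 1) := by
          have h4 : (4:ℝ)^m = 2^m * 2^m := by rw [← mul_pow]; norm_num
          rw [h4]
          have hne1 : ((n:ℝ)+1) ≠ 0 := by positivity
          have hne2 : (2:ℝ)^n ≠ 0 := by positivity
          field_simp
  refine ⟨hfirst, fun hm3 => ?_⟩
  refine le_trans hfirst ?_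
  have hM3 : (3:ℝ) ≤ (m:ℝ) := by exact_mod_cast hm3
  have e0 : (0:ℝ) ≤ (m:ℝ) := by positivity
  have e1 : (m:ℝ)^2 + 4*m + 2 ≤ 3*(m:ℝ)^2 := by nlinarith
  have e2 : ((m:ℝ)^2 + 4*m + 2)^2 ≤ 9*(m:ℝ)^4 := by
    have h := mul_self_le_mul_self (by positivity) e1
    nlinarith [h]
  have key2 : 16 * (m:ℝ) * ((m:ℝ)^2 + 4*m + 2)^2 ≤ 144 * (m:ℝ)^5 := by nlinarith [e2]
  have h4pos : (0:ℝ) < 4^m := by positivity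
  apply div_le_div₀ (by positivity) ?_ (by positivity) (le_refl _)
  calc 16 * (m:ℝ) * 4^m * ((m:ℝ)^2 + 4*m + 2)^2
      = (16 * (m:ℝ) * ((m:ℝ)^2 + 4*m + 2)^2) * 4^m := by ring
  _ ≤ (144 * (m:ℝ)^5) * 4^m := mul_le_mul_of_nonneg_right key2 h4pos.le
  _ = 144 * (m:ℝ)^5 * 4^m := by ring
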